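/- Consider a game with N players with C² payoff functions f_i : ℝ^N → ℝ, and suppose x* ∈ ℝ^N satisfies ∂f_i/∂x_i(x*) = 0 and ∂²f_i/∂x_i²(x*) < 0 for every i, and that the Jacobian matrix B = (∂²f_i/(∂x_i∂x_j)(x*))_{i,j} is strictly diagonally dominant. Fix positive constants k̄_1,…,k̄_N. Then x* is locally exponentially stable for the gradient play dynamics ẋ_i = k̄_i ∂f_i/∂x_i(x): there exist r, M, λ > 0 such that every solution x(t) with ‖x(0) − x*‖ ≤ r satisfies ‖x(t) − x*‖ ≤ M e^{−λ t} ‖x(0) − x*‖ for all t ≥ 0. -/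

import Mathlib

open scoped BigOperators

/-- Partial derivative of `f : ℝ^n → ℝ` with respect to the `j`-th coordinate at `x`. -/
noncomputable def pdv {n : ℕ} (f : (Fin n → ℝ) → ℝ) (j : Fin n) (x : Fin n → ℝ) : ℝ :=
  deriv (fun t => f (Function.update x j t)) (x j)

/-- Euclidean norm on `ℝ^n` (as functions `Fin n → ℝ`). -/
noncomputable def euclNorm {n : ℕ} (x : Fin n → ℝ) : ℝ :=
  Real.sqrt (∑ i, (x i) ^ 2)

open Finset


/-- Sign lemma for row-SDD Z-matrices: `A u = b ≥ 0` implies `u ≥ 0`. -/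
lemma sdd_mulVec_nonneg {N : ℕ} (A : Matrix (Fin N) (Fin N) ℝ)
    (hZ : ∀ i j, i ≠ j → A i j ≤ 0)
    (hSDD : ∀ i, ∑ j ∈ Finset.univ.erase i, |A i j| < A i i)
    {u b : Fin N → ℝ} (hb : ∀ j, 0 ≤ b j) (h : A.mulVec u = b) : ∀ j, 0 ≤ u j := by
  by_contra hcon
  push_neg at hcon
  obtain ⟨j0, hj0⟩ := hcon
  obtain ⟨m, -, hm⟩ := Finset.exists_min_image Finset.univ u ⟨j0, Finset.mem_univ j0⟩
  have hum : u m < 0 := lt_of_le_of_lt (hm j0 (Finset.mem_univ j0)) hj0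
  have hrow : (A.mulVec u) m = ∑ j, A m j * u j := by
    simp [Matrix.mulVec, dotProduct]
  have hsplit : ∑ j, A m j * u j = A m m * u m + ∑ j ∈ Finset.univ.erase m, A m j * u j := by
    rw [← Finset.add_sum_erase _ _ (Finset.mem_univ m)]
  have hterm : ∀ j ∈ Finset.univ.erase m, A m j * u j ≤ A m j * u m := by
    intro j hj
    exact mul_le_mul_of_nonpos_left (hm j (Finset.mem_univ j))
      (hZ m j ((Finset.mem_erase.mp hj).1).symm)
  have hsum : ∑ j ∈ Finset.univ.erase m, A m j * u j ≤
      (∑ j ∈ Finset.univ.erase m, A m j) * u m := by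
    rw [Finset.sum_mul]
    exact Finset.sum_le_sum hterm
  have habs : -(∑ j ∈ Finset.univ.erase m, |A m j|) ≤ ∑ j ∈ Finset.univ.erase m, A m j := by
    rw [← Finset.sum_neg_distrib]
    exact Finset.sum_le_sum fun j _ => neg_abs_le _
  have hpos : 0 < A m m + ∑ j ∈ Finset.univ.erase m, A m j := by
    have := hSDD m; linarith
  have : (A.mulVec u) m < 0 := by
    rw [hrow, hsplit]
    have : A m m * u m + (∑ j ∈ Finset.univ.erase m, A m j) * u m < 0 := by
      have := mul_neg_of_pos_of_neg hpos hum
      linarith [this]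
    nlinarith [hsum]
  rw [h] at this
  exact absurd (hb m) (not_le.mpr this)

lemma sdd_exists_posvec {N : ℕ} (A : Matrix (Fin N) (Fin N) ℝ)
    (hZ : ∀ i j, i ≠ j → A i j ≤ 0)
    (hSDD : ∀ i, ∑ j ∈ Finset.univ.erase i, |A i j| < A i i) :
    ∃ c : Fin N → ℝ, (∀ i, 0 < c i) ∧ ∀ i, ∑ j, A j i * c j = 1 := by
  have hinj : Function.Injective A.mulVecLin := by
    rw [← LinearMap.ker_eq_bot, LinearMap.ker_eq_bot']
    intro u hu
    have h0 : A.mulVec u = 0 := hu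
    have h1 : ∀ j, 0 ≤ u j := sdd_mulVec_nonneg A hZ hSDD (fun j => le_refl 0) h0
    have h0' : A.mulVec (-u) = 0 := by
      have := A.mulVecLin.map_neg u
      simpa [Matrix.mulVecLin_apply, h0] using this
    have h2 : ∀ j, 0 ≤ -u j := by
      have := sdd_mulVec_nonneg A hZ hSDD (fun j => le_refl 0) h0'
      simpa using this
    funext j
    have := le_antisymm (by linarith [h2 j]) (h1 j)
    simpa using this
  have hsurj : Function.Surjective A.mulVecLin :=
    (LinearMap.injective_iff_surjective).mp hinj
  choose v hv using fun i => hsurj (Pi.single i 1)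
  have hvnn : ∀ i j, 0 ≤ v i j := by
    intro i
    exact sdd_mulVec_nonneg A hZ hSDD
      (fun j => by by_cases h : j = i <;> simp [Pi.single_apply, h]) (hv i)
  have hAiipos : ∀ i, 0 < A i i :=
    fun i => lt_of_le_of_lt (Finset.sum_nonneg fun j _ => abs_nonneg _) (hSDD i)
  have hvii : ∀ i, 0 < v i i := by
    intro i
    have heq : ∑ j, A i j * v i j = 1 := by
      have := congrFun (hv i) i
      simpa [Matrix.mulVecLin_apply, Matrix.mulVec, dotProduct, Pi.single_apply] using this
    have hsplit : A i i * v i i + ∑ j ∈ Finset.univ.erase i, A i j * v i j = 1 := by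
      rw [Finset.add_sum_erase Finset.univ (fun j => A i j * v i j) (Finset.mem_univ i)]
      exact heq
    have hnegsum : ∑ j ∈ Finset.univ.erase i, A i j * v i j ≤ 0 :=
      Finset.sum_nonpos fun j hj =>
        mul_nonpos_of_nonpos_of_nonneg (hZ i j ((Finset.mem_erase.mp hj).1).symm) (hvnn i j)
    nlinarith [hAiipos i]
  refine ⟨fun i => ∑ j, v i j, fun i => ?_, fun l => ?_⟩
  · have : v i i ≤ ∑ j, v i j :=
      Finset.single_le_sum (fun j _ => hvnn i j) (Finset.mem_univ i)
    linarith [hvii i]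
  · -- key: ∑ j, A j l • v j = Pi.single l 1, by injectivity
    have hlin : A.mulVec (∑ j, A j l • v j) = A.mulVec (Pi.single l 1) := by
      have h1 : A.mulVecLin (∑ j, A j l • v j) = ∑ j, A j l • A.mulVecLin (v j) := by
        rw [map_sum]; exact Finset.sum_congr rfl fun j _ => by rw [map_smul]
      have h2 : (∑ j, A j l • (Pi.single j 1 : Fin N → ℝ)) = A.mulVecLin (Pi.single l 1) := by
        funext m
        simp only [Matrix.mulVecLin_apply, Matrix.mulVec, dotProduct, Finset.sum_apply,
          Pi.smul_apply, Pi.single_apply, smul_eq_mul]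
        simp [mul_ite, mul_one, mul_zero, Finset.sum_ite_eq, Finset.sum_ite_eq']
      calc A.mulVec (∑ j, A j l • v j) = A.mulVecLin (∑ j, A j l • v j) := rfl
        _ = ∑ j, A j l • A.mulVecLin (v j) := h1
        _ = ∑ j, A j l • (Pi.single j 1 : Fin N → ℝ) := by
            exact Finset.sum_congr rfl fun j _ => by rw [hv j]
        _ = A.mulVecLin (Pi.single l 1) := h2
        _ = A.mulVec (Pi.single l 1) := rfl
    have hkey : (∑ j, A j l • v j) = Pi.single l 1 := by
      apply hinj
      exact hlin
    have := congrArg (fun w => ∑ m, w m) hkey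
    simp only [Finset.sum_apply, Pi.smul_apply, smul_eq_mul] at this
    calc ∑ j, A j l * (∑ m, v j m) = ∑ j, ∑ m, A j l * v j m := by
          exact Finset.sum_congr rfl fun j _ => Finset.mul_sum _ _ _
      _ = ∑ m, ∑ j, A j l * v j m := Finset.sum_comm
      _ = ∑ m, (Pi.single l 1 : Fin N → ℝ) m := by
          refine Finset.sum_congr rfl fun m _ => ?_
          have := congrFun hkey m
          simpa using this
      _ = 1 := by simp

lemma pdv_eq_fderiv {n : ℕ} {F : (Fin n → ℝ) → ℝ} {x : Fin n → ℝ}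
    (hF : DifferentiableAt ℝ F x) (j : Fin n) :
    pdv F j x = fderiv ℝ F x (Pi.single j 1) := by
  have hu : HasDerivAt (Function.update x j) (Pi.single j (1:ℝ)) (x j) :=
    hasDerivAt_update x j (x j)
  have hFx : HasFDerivAt F (fderiv ℝ F x) (Function.update x j (x j)) := by
    rw [Function.update_eq_self]; exact hF.hasFDerivAt
  have := hFx.comp_hasDerivAt (x j) hu
  exact this.deriv

lemma clm_sum {n : ℕ} (ℓ : (Fin n → ℝ) →L[ℝ] ℝ) (y : Fin n → ℝ) :
    ℓ y = ∑ j, y j * ℓ (Pi.single j 1) := by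
  conv_lhs => rw [pi_eq_sum_univ y]
  rw [map_sum]
  refine Finset.sum_congr rfl fun j _ => ?_
  rw [map_smul, smul_eq_mul]
  congr 1
  congr 1
  funext l
  simp [Pi.single_apply, eq_comm]

lemma key_term (cc b yy zz : ℝ) (hcc : 0 ≤ cc) :
    2 * cc * b * yy * zz ≤ cc * |b| * (yy ^ 2 + zz ^ 2) := by
  have h1 : b * yy * zz ≤ |b| * (|yy| * |zz|) := by
    calc b * yy * zz ≤ |b * yy * zz| := le_abs_self _
      _ = |b| * (|yy| * |zz|) := by rw [abs_mul, abs_mul]; ring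
  have h2 : 2 * (|yy| * |zz|) ≤ yy ^ 2 + zz ^ 2 := by
    nlinarith [sq_nonneg (|yy| - |zz|), sq_abs yy, sq_abs zz]
  have h3 : |b| * (2 * (|yy| * |zz|)) ≤ |b| * (yy ^ 2 + zz ^ 2) :=
    mul_le_mul_of_nonneg_left h2 (abs_nonneg b)
  have h4 : 2 * b * yy * zz ≤ |b| * (yy ^ 2 + zz ^ 2) := by nlinarith [abs_nonneg b]
  calc 2 * cc * b * yy * zz = cc * (2 * b * yy * zz) := by ring
    _ ≤ cc * (|b| * (yy ^ 2 + zz ^ 2)) := mul_le_mul_of_nonneg_left h4 hcc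
    _ = cc * |b| * (yy ^ 2 + zz ^ 2) := by ring

lemma quad_bound {N : ℕ} (c : Fin N → ℝ) (hc : ∀ i, 0 < c i) (B : Matrix (Fin N) (Fin N) ℝ)
    (hkey : ∀ i, 2 * c i * B i i + c i * (∑ j ∈ Finset.univ.erase i, |B i j|)
      + ∑ j ∈ Finset.univ.erase i, c j * |B j i| ≤ -1)
    (y : Fin N → ℝ) :
    ∑ i, 2 * c i * y i * (∑ j, B i j * y j) ≤ -∑ i, y i ^ 2 := by
  have hswap : ∑ i, ∑ j ∈ Finset.univ.erase i, c i * |B i j| * y j ^ 2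
      = ∑ i, (∑ j ∈ Finset.univ.erase i, c j * |B j i|) * y i ^ 2 := by
    have hF : ∀ i : Fin N, ∑ j ∈ Finset.univ.erase i, c i * |B i j| * y j ^ 2
        = ∑ j, if j = i then 0 else c i * |B i j| * y j ^ 2 := by
      intro i
      rw [← Finset.sum_erase (f := fun j => if j = i then (0:ℝ) else c i * |B i j| * y j ^ 2)
        (a := i) Finset.univ (by simp)]
      exact Finset.sum_congr rfl fun j hj => (if_neg (Finset.mem_erase.mp hj).1).symm
    have hG : ∀ j : Fin N, (∑ i ∈ Finset.univ.erase j, c i * |B i j|) * y j ^ 2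
        = ∑ i, if j = i then 0 else c i * |B i j| * y j ^ 2 := by
      intro j
      rw [Finset.sum_mul,
        ← Finset.sum_erase (f := fun i => if j = i then (0:ℝ) else c i * |B i j| * y j ^ 2)
        (a := j) Finset.univ (by simp)]
      exact Finset.sum_congr rfl fun i hi => (if_neg (Ne.symm (Finset.mem_erase.mp hi).1)).symm
    calc ∑ i, ∑ j ∈ Finset.univ.erase i, c i * |B i j| * y j ^ 2
        = ∑ i, ∑ j, if j = i then 0 else c i * |B i j| * y j ^ 2 :=
          Finset.sum_congr rfl fun i _ => hF i
      _ = ∑ j, ∑ i, if j = i then 0 else c i * |B i j| * y j ^ 2 := Finset.sum_comm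
      _ = ∑ j, (∑ i ∈ Finset.univ.erase j, c i * |B i j|) * y j ^ 2 :=
          Finset.sum_congr rfl fun j _ => (hG j).symm
  have hstep : ∀ i : Fin N, 2 * c i * y i * (∑ j, B i j * y j)
      ≤ 2 * c i * B i i * y i ^ 2 + c i * (∑ j ∈ Finset.univ.erase i, |B i j|) * y i ^ 2
        + ∑ j ∈ Finset.univ.erase i, c i * |B i j| * y j ^ 2 := by
    intro i
    have hexp : 2 * c i * y i * (∑ j, B i j * y j) = ∑ j, 2 * c i * B i j * y i * y j := by
      rw [Finset.mul_sum]; exact Finset.sum_congr rfl fun j _ => by ring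
    rw [hexp, ← Finset.add_sum_erase Finset.univ (fun j => 2 * c i * B i j * y i * y j)
      (Finset.mem_univ i)]
    have hdiag : 2 * c i * B i i * y i * y i = 2 * c i * B i i * y i ^ 2 := by ring
    rw [hdiag]
    have hoff : ∑ j ∈ Finset.univ.erase i, 2 * c i * B i j * y i * y j
        ≤ ∑ j ∈ Finset.univ.erase i, c i * |B i j| * (y i ^ 2 + y j ^ 2) :=
      Finset.sum_le_sum fun j _ => key_term (c i) (B i j) (y i) (y j) (hc i).le
    have hsplit : ∑ j ∈ Finset.univ.erase i, c i * |B i j| * (y i ^ 2 + y j ^ 2)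
        = c i * (∑ j ∈ Finset.univ.erase i, |B i j|) * y i ^ 2
          + ∑ j ∈ Finset.univ.erase i, c i * |B i j| * y j ^ 2 := by
      rw [Finset.mul_sum, Finset.sum_mul, ← Finset.sum_add_distrib]
      exact Finset.sum_congr rfl fun j _ => by ring
    linarith [hoff, hsplit.le, hsplit.ge]
  calc ∑ i, 2 * c i * y i * (∑ j, B i j * y j)
      ≤ ∑ i, (2 * c i * B i i * y i ^ 2 + c i * (∑ j ∈ Finset.univ.erase i, |B i j|) * y i ^ 2
          + ∑ j ∈ Finset.univ.erase i, c i * |B i j| * y j ^ 2) :=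
        Finset.sum_le_sum fun i _ => hstep i
    _ = ∑ i, (2 * c i * B i i + c i * (∑ j ∈ Finset.univ.erase i, |B i j|)
          + ∑ j ∈ Finset.univ.erase i, c j * |B j i|) * y i ^ 2 := by
        rw [Finset.sum_add_distrib, Finset.sum_add_distrib, hswap,
          ← Finset.sum_add_distrib, ← Finset.sum_add_distrib]
        exact Finset.sum_congr rfl fun i _ => by ring
    _ ≤ ∑ i, (-1) * y i ^ 2 :=
        Finset.sum_le_sum fun i _ => mul_le_mul_of_nonneg_right (hkey i) (sq_nonneg _)
    _ = -∑ i, y i ^ 2 := by rw [← Finset.sum_neg_distrib]; exact Finset.sum_congr rfl fun i _ => by ring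

set_option maxHeartbeats 1000000 in
theorem statement15 {N : ℕ} (f : Fin N → (Fin N → ℝ) → ℝ)
    (hf : ∀ i, ContDiff ℝ 2 (f i))
    (xs : Fin N → ℝ)
    (hcrit : ∀ i, pdv (f i) i xs = 0)
    (hneg : ∀ i, pdv (fun z => pdv (f i) i z) i xs < 0)
    (hSDD : ∀ i, ∑ j ∈ Finset.univ.erase i, |pdv (fun z => pdv (f i) i z) j xs| <
      |pdv (fun z => pdv (f i) i z) i xs|)
    (k : Fin N → ℝ) (hk : ∀ i, 0 < k i) :
    ∃ r > (0 : ℝ), ∃ M > (0 : ℝ), ∃ lam > (0 : ℝ),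
      ∀ x : ℝ → Fin N → ℝ,
        (∀ t, 0 ≤ t → ∀ i, HasDerivAt (fun s => x s i) (k i * pdv (f i) i (x t)) t) →
        euclNorm (fun i => x 0 i - xs i) ≤ r →
        ∀ t, 0 ≤ t →
          euclNorm (fun i => x t i - xs i) ≤
            M * Real.exp (-lam * t) * euclNorm (fun i => x 0 i - xs i) := by
  rcases Nat.eq_zero_or_pos N with hN0 | hN0
  · subst hN0
    refine ⟨1, one_pos, 1, one_pos, 1, one_pos, fun x _ _ t _ => ?_⟩
    simp [euclNorm]
  haveI : Nonempty (Fin N) := ⟨⟨0, hN0⟩⟩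
  -- basic differentiability
  have hfd : ∀ i, Differentiable ℝ (f i) := fun i => (hf i).differentiable (by norm_num)
  set g : Fin N → (Fin N → ℝ) → ℝ := fun i z => pdv (f i) i z with hgdef
  have hgeq : ∀ i, g i = fun z => fderiv ℝ (f i) z (Pi.single i 1) :=
    fun i => funext fun z => pdv_eq_fderiv (hfd i z) i
  have hgC1 : ∀ i, ContDiff ℝ 1 (g i) := by
    intro i
    rw [hgeq i]
    exact ((hf i).fderiv_right (by norm_num)).clm_apply contDiff_const
  have hgd : ∀ i, Differentiable ℝ (g i) := fun i => (hgC1 i).differentiable one_ne_zero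
  -- the Jacobian matrix
  set B : Matrix (Fin N) (Fin N) ℝ := fun i j => pdv (g i) j xs with hBdef
  have hBeq : ∀ i j, B i j = fderiv ℝ (g i) xs (Pi.single j 1) :=
    fun i j => pdv_eq_fderiv ((hgd i) xs) j
  have hBneg : ∀ i, B i i < 0 := hneg
  have hBSDD : ∀ i, ∑ j ∈ Finset.univ.erase i, |B i j| < |B i i| := hSDD
  -- the scaling vector c
  set R : Fin N → ℝ := fun i => ∑ j ∈ Finset.univ.erase i, |B i j| with hRdef
  set A : Matrix (Fin N) (Fin N) ℝ :=
    fun i j => if i = j then 2 * |B i i| - R i else -|B i j| with hAdef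
  have hAoff : ∀ i j, i ≠ j → A i j = -|B i j| := by
    intro i j h
    simp only [hAdef]
    exact if_neg h
  have hAdiag : ∀ i, A i i = 2 * |B i i| - R i := by
    intro i
    simp [hAdef]
  have hZ : ∀ i j, i ≠ j → A i j ≤ 0 := by
    intro i j hij
    rw [hAoff i j hij]
    exact neg_nonpos.mpr (abs_nonneg _)
  have hASDD : ∀ i, ∑ j ∈ Finset.univ.erase i, |A i j| < A i i := by
    intro i
    have h1 : ∑ j ∈ Finset.univ.erase i, |A i j| = ∑ j ∈ Finset.univ.erase i, |B i j| :=
      Finset.sum_congr rfl fun j hj => by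
        rw [hAoff i j (fun h => (Finset.mem_erase.mp hj).1 h.symm), abs_neg, abs_abs]
    rw [h1, hAdiag i]
    simp only [hRdef]
    have h2 := hBSDD i
    linarith
  obtain ⟨c, hcpos, hc1⟩ := sdd_exists_posvec A hZ hASDD
  -- key coefficient bound
  have hkey : ∀ i, 2 * c i * B i i + c i * (∑ j ∈ Finset.univ.erase i, |B i j|)
      + ∑ j ∈ Finset.univ.erase i, c j * |B j i| ≤ -1 := by
    intro i
    have h1 := hc1 i
    rw [← Finset.add_sum_erase Finset.univ (fun j => A j i * c j) (Finset.mem_univ i)] at h1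
    have h2 : ∑ j ∈ Finset.univ.erase i, A j i * c j
        = -∑ j ∈ Finset.univ.erase i, c j * |B j i| := by
      rw [← Finset.sum_neg_distrib]
      refine Finset.sum_congr rfl fun j hj => ?_
      rw [hAoff j i (Finset.mem_erase.mp hj).1]
      ring
    have h3 : A i i = 2 * |B i i| - R i := hAdiag i
    have habs : |B i i| = -(B i i) := abs_of_neg (hBneg i)
    rw [h2, h3, habs] at h1
    have hR : R i = ∑ j ∈ Finset.univ.erase i, |B i j| := by simp only [hRdef]
    rw [hR] at h1
    linarith [h1]
  -- the vector field and its linearization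
  set Φ : (Fin N → ℝ) → (Fin N → ℝ) := fun z i => g i z with hΦdef
  set L : (Fin N → ℝ) →L[ℝ] (Fin N → ℝ) :=
    ContinuousLinearMap.pi (fun i => fderiv ℝ (g i) xs) with hLdef
  have hΦ : HasFDerivAt Φ L xs := hasFDerivAt_pi.2 fun i => ((hgd i) xs).hasFDerivAt
  have hΦxs : Φ xs = 0 := funext fun i => hcrit i
  have hLy : ∀ y : Fin N → ℝ, ∀ i, L y i = ∑ j, B i j * y j := by
    intro y i
    have h0 : L y i = fderiv ℝ (g i) xs y := rfl
    rw [h0, clm_sum]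
    exact Finset.sum_congr rfl fun j _ => by rw [← hBeq i j]; ring
  -- constants
  set w : Fin N → ℝ := fun i => c i / k i with hwdef
  have hwpos : ∀ i, 0 < w i := fun i => div_pos (hcpos i) (hk i)
  set Csum : ℝ := ∑ i, c i with hCdef
  have hCpos : 0 < Csum := Finset.sum_pos (fun i _ => hcpos i) Finset.univ_nonempty
  set Wmax : ℝ := ∑ i, w i with hWdef
  have hWpos : 0 < Wmax := Finset.sum_pos (fun i _ => hwpos i) Finset.univ_nonempty
  have hwleW : ∀ i, w i ≤ Wmax :=
    fun i => Finset.single_le_sum (fun j _ => (hwpos j).le) (Finset.mem_univ i)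
  set wmin : ℝ := Finset.univ.inf' Finset.univ_nonempty w with hwmindef
  have hwminpos : 0 < wmin := (Finset.lt_inf'_iff _).mpr fun i _ => hwpos i
  have hwminle : ∀ i, wmin ≤ w i := fun i => Finset.inf'_le _ (Finset.mem_univ i)
  have hwminW : wmin ≤ Wmax := le_trans (hwminle (Classical.arbitrary _)) (hwleW _)
  set ε : ℝ := 1 / (2 * (2 * Csum + 1)) with hεdef
  have hε : 0 < ε := by positivity
  -- extract the little-o bound
  obtain ⟨δ, hδpos, hδ⟩ : ∃ δ > (0:ℝ), ∀ z : Fin N → ℝ,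
      ‖z - xs‖ < δ → ‖Φ z - L (z - xs)‖ ≤ ε * ‖z - xs‖ := by
    have hlo := hΦ.isLittleO.def hε
    rw [Metric.eventually_nhds_iff] at hlo
    obtain ⟨δ, hδpos, h⟩ := hlo
    refine ⟨δ, hδpos, fun z hz => ?_⟩
    have := h (show dist z xs < δ by rwa [dist_eq_norm])
    simpa [hΦxs] using this
  -- sup norm vs euclidean sums
  have hnormQ : ∀ v : Fin N → ℝ, ‖v‖ ≤ Real.sqrt (∑ i, v i ^ 2) := by
    intro v
    rw [pi_norm_le_iff_of_nonneg (Real.sqrt_nonneg _)]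
    intro i
    rw [Real.norm_eq_abs, ← Real.sqrt_sq_eq_abs]
    exact Real.sqrt_le_sqrt (Finset.single_le_sum (fun j _ => sq_nonneg (v j)) (Finset.mem_univ i))
  have hcoordQ : ∀ v : Fin N → ℝ, ∀ i, |v i| ≤ Real.sqrt (∑ j, v j ^ 2) := by
    intro v i
    rw [← Real.sqrt_sq_eq_abs]
    exact Real.sqrt_le_sqrt (Finset.single_le_sum (fun j _ => sq_nonneg (v j)) (Finset.mem_univ i))
  -- final constants
  set lam3 : ℝ := 1 / (4 * Wmax) with hlam3def
  have hlam3 : 0 < lam3 := by positivity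
  set ρ : ℝ := wmin * δ ^ 2 / 2 with hρdef
  have hρpos : 0 < ρ := by positivity
  refine ⟨Real.sqrt (ρ / (2 * Wmax)), Real.sqrt_pos.mpr (by positivity),
    Real.sqrt (Wmax / wmin), Real.sqrt_pos.mpr (by positivity), lam3 / 2, by positivity, ?_⟩
  intro x hx hinit t ht
  -- abbreviations for the solution
  set V : ℝ → ℝ := fun s => ∑ i, w i * (x s i - xs i) ^ 2 with hVdef
  set VD : ℝ → ℝ := fun s => ∑ i, w i * (2 * (x s i - xs i) ^ 1 * (k i * pdv (f i) i (x s)))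
    with hVDdef
  set Q : ℝ → ℝ := fun s => ∑ i, (x s i - xs i) ^ 2 with hQdef
  have hQnonneg : ∀ s, 0 ≤ Q s := fun s => Finset.sum_nonneg fun i _ => sq_nonneg _
  have hVQ1 : ∀ s, V s ≤ Wmax * Q s := by
    intro s
    rw [hQdef, Finset.mul_sum]
    exact Finset.sum_le_sum fun i _ => mul_le_mul_of_nonneg_right (hwleW i) (sq_nonneg _)
  have hVQ2 : ∀ s, wmin * Q s ≤ V s := by
    intro s
    rw [hQdef, Finset.mul_sum]
    exact Finset.sum_le_sum fun i _ => mul_le_mul_of_nonneg_right (hwminle i) (sq_nonneg _)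
  have hVnonneg : ∀ s, 0 ≤ V s := fun s => Finset.sum_nonneg fun i _ =>
    mul_nonneg (hwpos i).le (sq_nonneg _)
  have hVderiv : ∀ u, 0 ≤ u → HasDerivAt V (VD u) u := by
    intro u hu
    apply HasDerivAt.fun_sum
    intro i _
    have h1 : HasDerivAt (fun s => x s i - xs i) (k i * pdv (f i) i (x u)) u :=
      (hx u hu i).sub_const _
    exact (h1.pow 2).const_mul (w i)
  -- initial bound
  have hQ0 : Q 0 ≤ ρ / (2 * Wmax) := by
    have h1 : Real.sqrt (Q 0) ≤ Real.sqrt (ρ / (2 * Wmax)) := hinit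
    calc Q 0 = Real.sqrt (Q 0) ^ 2 := (Real.sq_sqrt (hQnonneg 0)).symm
      _ ≤ Real.sqrt (ρ / (2 * Wmax)) ^ 2 := by
          exact pow_le_pow_left₀ (Real.sqrt_nonneg _) h1 2
      _ = ρ / (2 * Wmax) := Real.sq_sqrt (by positivity)
  have hV0 : V 0 ≤ ρ / 2 := by
    calc V 0 ≤ Wmax * Q 0 := hVQ1 0
      _ ≤ Wmax * (ρ / (2 * Wmax)) := mul_le_mul_of_nonneg_left hQ0 hWpos.le
      _ = ρ / 2 := by field_simp
  -- the pointwise derivative bound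
  have hbound : ∀ u, 0 ≤ u → Q u < δ ^ 2 → VD u ≤ -(2 * lam3) * V u := by
    intro u hu hQu
    set yv : Fin N → ℝ := fun i => x u i - xs i with hyvdef
    have hyvsub : (x u - xs) = yv := rfl
    have hQyv : ∑ i, yv i ^ 2 = Q u := rfl
    have hsq : Real.sqrt (Q u) < δ := by
      have := Real.sqrt_lt_sqrt (hQnonneg u) hQu
      rwa [Real.sqrt_sq hδpos.le] at this
    have hznorm : ‖x u - xs‖ ≤ Real.sqrt (Q u) := by
      rw [hyvsub]; exact le_trans (hnormQ yv) (le_of_eq (by rw [hQyv]))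
    have herr0 := hδ (x u) (lt_of_le_of_lt hznorm hsq)
    have herr : ∀ i, |g i (x u) - ∑ j, B i j * yv j| ≤ ε * Real.sqrt (Q u) := by
      intro i
      have h1 : |(Φ (x u) - L (x u - xs)) i| ≤ ‖Φ (x u) - L (x u - xs)‖ := by
        rw [← Real.norm_eq_abs]; exact norm_le_pi_norm _ i
      have h2 : (Φ (x u) - L (x u - xs)) i = g i (x u) - ∑ j, B i j * yv j := by
        rw [Pi.sub_apply, hLy (x u - xs) i]
        congr 1
      rw [← h2]
      calc |(Φ (x u) - L (x u - xs)) i| ≤ ‖Φ (x u) - L (x u - xs)‖ := h1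
        _ ≤ ε * ‖x u - xs‖ := herr0
        _ ≤ ε * Real.sqrt (Q u) := mul_le_mul_of_nonneg_left hznorm hε.le
    -- rewrite VD
    have hVDeq : VD u = ∑ i, 2 * c i * yv i * (∑ j, B i j * yv j)
        + ∑ i, 2 * c i * yv i * (g i (x u) - ∑ j, B i j * yv j) := by
      rw [← Finset.sum_add_distrib]
      refine Finset.sum_congr rfl fun i _ => ?_
      have hwk : w i * k i = c i := div_mul_cancel₀ (c i) (hk i).ne'
      have : g i (x u) = pdv (f i) i (x u) := rfl
      rw [← this]
      calc w i * (2 * yv i ^ 1 * (k i * g i (x u))) = (w i * k i) * (2 * yv i * g i (x u)) := by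
            ring
        _ = c i * (2 * yv i * g i (x u)) := by rw [hwk]
        _ = 2 * c i * yv i * (∑ j, B i j * yv j)
            + 2 * c i * yv i * (g i (x u) - ∑ j, B i j * yv j) := by ring
    have hquad := quad_bound c hcpos B hkey yv
    have herrsum : ∑ i, 2 * c i * yv i * (g i (x u) - ∑ j, B i j * yv j)
        ≤ 2 * ε * Csum * Q u := by
      have h1 : ∀ i, 2 * c i * yv i * (g i (x u) - ∑ j, B i j * yv j)
          ≤ 2 * c i * (ε * Q u) := by
        intro i
        have h2 : |yv i| ≤ Real.sqrt (Q u) := by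
          have := hcoordQ yv i; rwa [hQyv] at this
        have h3 : yv i * (g i (x u) - ∑ j, B i j * yv j) ≤ Real.sqrt (Q u) * (ε * Real.sqrt (Q u)) := by
          calc yv i * (g i (x u) - ∑ j, B i j * yv j)
              ≤ |yv i * (g i (x u) - ∑ j, B i j * yv j)| := le_abs_self _
            _ = |yv i| * |g i (x u) - ∑ j, B i j * yv j| := abs_mul _ _
            _ ≤ Real.sqrt (Q u) * (ε * Real.sqrt (Q u)) :=
                mul_le_mul h2 (herr i) (abs_nonneg _) (Real.sqrt_nonneg _)
        have h4 : Real.sqrt (Q u) * (ε * Real.sqrt (Q u)) = ε * Q u := by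
          rw [show Real.sqrt (Q u) * (ε * Real.sqrt (Q u))
            = ε * (Real.sqrt (Q u) * Real.sqrt (Q u)) from by ring,
            Real.mul_self_sqrt (hQnonneg u)]
        rw [h4] at h3
        calc 2 * c i * yv i * (g i (x u) - ∑ j, B i j * yv j)
            = 2 * c i * (yv i * (g i (x u) - ∑ j, B i j * yv j)) := by ring
          _ ≤ 2 * c i * (ε * Q u) :=
              mul_le_mul_of_nonneg_left h3 (by nlinarith [hcpos i])
      calc ∑ i, 2 * c i * yv i * (g i (x u) - ∑ j, B i j * yv j)
          ≤ ∑ i, 2 * c i * (ε * Q u) := Finset.sum_le_sum fun i _ => h1 i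
        _ = (∑ i, c i) * (2 * (ε * Q u)) := by
            rw [Finset.sum_mul]
            exact Finset.sum_congr rfl fun i _ => by ring
        _ = 2 * ε * Csum * Q u := by rw [hCdef]; ring
    have hq' : ∑ i, 2 * c i * yv i * (∑ j, B i j * yv j) ≤ -(Q u) := by
      rw [← hQyv]
      calc ∑ i, 2 * c i * yv i * (∑ j, B i j * yv j) ≤ -∑ i, yv i ^ 2 := hquad
        _ = -(∑ i, yv i ^ 2) := by ring
    have hVDle : VD u ≤ -(Q u) + 2 * ε * Csum * Q u := by
      rw [hVDeq]; exact add_le_add hq' herrsum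
    have hepsC : 2 * ε * Csum ≤ 1 / 2 := by
      have h2C : (0:ℝ) < 2 * Csum + 1 := by positivity
      rw [hεdef, show (2:ℝ) * (1 / (2 * (2 * Csum + 1))) * Csum = Csum / (2 * Csum + 1) by
        field_simp]
      rw [div_le_iff₀ h2C]
      linarith
    have hhalf : VD u ≤ -(1/2) * Q u := by
      have := mul_le_mul_of_nonneg_right hepsC (hQnonneg u)
      linarith
    have hVQ : (2 * lam3) * V u ≤ 1/2 * Q u := by
      have h1 : (2 * lam3) * V u ≤ (2 * lam3) * (Wmax * Q u) :=
        mul_le_mul_of_nonneg_left (hVQ1 u) (by positivity)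
      have h2 : (2 * lam3) * (Wmax * Q u) = 1/2 * Q u := by
        rw [hlam3def]; field_simp; ring
      linarith
    linarith
  -- fencing argument
  have main : ∀ η, 0 < η → η ≤ ρ / 2 → V t ≤ (V 0 + η) * Real.exp (-lam3 * t) := by
    intro η hη1 hη2
    set Bd : ℝ → ℝ := fun s => (V 0 + η) * Real.exp (-lam3 * s) with hBddef
    have hBdpos : ∀ s, 0 < Bd s :=
      fun s => mul_pos (by linarith [hVnonneg 0]) (Real.exp_pos _)
    have hBd' : ∀ s, HasDerivAt Bd (-lam3 * Bd s) s := by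
      intro s
      have h1 : HasDerivAt (fun u : ℝ => -lam3 * u) (-lam3) s := by
        simpa using (hasDerivAt_id s).const_mul (-lam3)
      have h2 := h1.exp
      have h3 := h2.const_mul (V 0 + η)
      refine h3.congr_deriv ?_
      simp only [hBddef]
      ring
    have hcont : ContinuousOn V (Set.Icc 0 t) :=
      fun u hu => ((hVderiv u hu.1).continuousAt).continuousWithinAt
    have hder : ∀ u ∈ Set.Ico 0 t, HasDerivWithinAt V (VD u) (Set.Ici u) u :=
      fun u hu => (hVderiv u hu.1).hasDerivWithinAt
    have hstart : V 0 ≤ Bd 0 := by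
      simp only [hBddef, mul_zero, neg_zero, Real.exp_zero, mul_one]
      linarith
    have hbnd : ∀ u ∈ Set.Ico 0 t, V u = Bd u → VD u < -lam3 * Bd u := by
      intro u hu hVu
      have hexple : Real.exp (-lam3 * u) ≤ 1 := by
        calc Real.exp (-lam3 * u) ≤ Real.exp 0 :=
              Real.exp_le_exp.mpr (by nlinarith [hlam3, hu.1])
          _ = 1 := Real.exp_zero
      have hBdle : Bd u ≤ V 0 + η := by
        simp only [hBddef]
        exact mul_le_of_le_one_right (by linarith [hVnonneg 0]) hexple
      have hVu2 : V u ≤ ρ := by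
        rw [hVu]
        linarith [hV0, hη2, hBdle]
      have hQu : Q u < δ ^ 2 := by
        have h1 : wmin * Q u ≤ V u := hVQ2 u
        have h2 : V u < wmin * δ ^ 2 := by
          rw [hρdef] at hVu2
          nlinarith [hwminpos, hδpos, hρpos]
        exact lt_of_mul_lt_mul_left (lt_of_le_of_lt h1 h2) hwminpos.le
      have h5 := hbound u hu.1 hQu
      have h6 : -(2 * lam3) * V u < -lam3 * Bd u := by
        rw [hVu]
        have := hBdpos u
        nlinarith [hlam3]
      linarith
    have fence := image_le_of_deriv_right_lt_deriv_boundary (f := V) (f' := VD)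
      (a := 0) (b := t) (B := Bd) (B' := fun s => -lam3 * Bd s)
      hcont hder hstart hBd' hbnd
    exact fence (Set.right_mem_Icc.mpr ht)
  -- remove η
  have hVt : V t ≤ V 0 * Real.exp (-lam3 * t) := by
    by_contra hcon
    push_neg at hcon
    have hexple : Real.exp (-lam3 * t) ≤ 1 := by
      calc Real.exp (-lam3 * t) ≤ Real.exp 0 := Real.exp_le_exp.mpr (by nlinarith [hlam3])
        _ = 1 := Real.exp_zero
    set eta : ℝ := min (ρ / 2) ((V t - V 0 * Real.exp (-lam3 * t)) / 2) with hetadef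
    have hetapos : 0 < eta := lt_min (by positivity) (by linarith)
    have h := main eta hetapos (min_le_left _ _)
    have hexp_expand : (V 0 + eta) * Real.exp (-lam3 * t)
        = V 0 * Real.exp (-lam3 * t) + eta * Real.exp (-lam3 * t) := by ring
    rw [hexp_expand] at h
    have h2 : eta ≤ (V t - V 0 * Real.exp (-lam3 * t)) / 2 := min_le_right _ _
    have h3 : eta * Real.exp (-lam3 * t) ≤ eta := mul_le_of_le_one_right hetapos.le hexple
    linarith
  -- conclusion
  have hQt : Q t ≤ Wmax / wmin * Real.exp (-lam3 * t) * Q 0 := by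
    have h1 : wmin * Q t ≤ V t := hVQ2 t
    have h2 : V 0 * Real.exp (-lam3 * t) ≤ Wmax * Q 0 * Real.exp (-lam3 * t) :=
      mul_le_mul_of_nonneg_right (hVQ1 0) (Real.exp_pos _).le
    have h3 : wmin * Q t ≤ Wmax * Q 0 * Real.exp (-lam3 * t) := by linarith
    rw [show Wmax / wmin * Real.exp (-lam3 * t) * Q 0
      = (Wmax * Q 0 * Real.exp (-lam3 * t)) / wmin by field_simp]
    rw [le_div_iff₀ hwminpos]
    linarith
  have hse : Real.sqrt (Real.exp (-lam3 * t)) = Real.exp (-(lam3 / 2) * t) := by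
    rw [show -lam3 * t = -(lam3 / 2) * t + -(lam3 / 2) * t by ring, Real.exp_add,
      Real.sqrt_mul_self (Real.exp_pos _).le]
  have hfin : Real.sqrt (Q t)
      ≤ Real.sqrt (Wmax / wmin) * Real.exp (-(lam3 / 2) * t) * Real.sqrt (Q 0) := by
    have h0 : Real.sqrt (Q t) ≤ Real.sqrt (Wmax / wmin * Real.exp (-lam3 * t) * Q 0) :=
      Real.sqrt_le_sqrt hQt
    rw [Real.sqrt_mul (by positivity), Real.sqrt_mul (by positivity), hse] at h0
    linarith [h0]
  exact hfin
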